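/- Let $\mathfrak{g}$ be a finite-dimensional Lie algebra, $\mathfrak{l}\subseteq\mathfrak{g}$ a subalgebra acting semisimply on $\mathfrak{g}$, $\Omega\in(S^2\mathfrak{g})^{\mathfrak{g}}$ with associated ideal $\mathfrak{g}_\Omega$ (span of components of $\Omega$) on which the inverse form $(\cdot,\cdot)=\Omega^{-1}$ is defined, and suppose the restriction of this form to $\mathfrak{l}_\Omega=\mathfrak{l}\cap\mathfrak{g}_\Omega$ is nondegenerate. Then there exists an $\mathfrak{l}$-invariant complement $\mathfrak{m}$ of $\mathfrak{l}$ in $\mathfrak{g}$ such that $\Omega\in(\mathfrak{l}\otimes\mathfrak{l})\oplus(\mathfrak{m}\otimes\mathfrak{m})$. -/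

import Mathlib

open scoped TensorProduct

/-- The image of `p ⊗ q` inside `g ⊗ g`, for submodules `p q ⊆ g`. -/
noncomputable def tensorSub (g : Type) [AddCommGroup g] [Module ℂ g]
    (p q : Submodule ℂ g) : Submodule ℂ (g ⊗[ℂ] g) :=
  Submodule.map₂ (TensorProduct.mk ℂ g g) p q

/-- Contraction of `Ω ∈ g ⊗ g` with a functional in the first slot. -/
noncomputable def contractOmega (g : Type) [AddCommGroup g] [Module ℂ g]
    (Ω : g ⊗[ℂ] g) (ξ : Module.Dual ℂ g) : g :=
  TensorProduct.lid ℂ g (TensorProduct.map ξ LinearMap.id Ω)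

namespace Stmt19Aux

open TensorProduct

section Plain

variable {g : Type} [AddCommGroup g] [Module ℂ g]

/-- Pairing of `ξ ⊗ η` against elements of `g ⊗ g`. -/
noncomputable def pairT (ξ η : Module.Dual ℂ g) : g ⊗[ℂ] g →ₗ[ℂ] ℂ :=
  (TensorProduct.lid ℂ ℂ).toLinearMap ∘ₗ TensorProduct.map ξ η

lemma pairT_tmul (ξ η : Module.Dual ℂ g) (a b : g) :
    pairT ξ η (a ⊗ₜ[ℂ] b) = ξ a * η b := by
  simp [pairT, smul_eq_mul]

lemma contractOmega_tmul (ξ : Module.Dual ℂ g) (a b : g) :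
    contractOmega g (a ⊗ₜ[ℂ] b) ξ = ξ a • b := by
  simp [contractOmega]

lemma contractOmega_zero (ξ : Module.Dual ℂ g) :
    contractOmega g (0 : g ⊗[ℂ] g) ξ = 0 := by
  simp [contractOmega]

lemma contractOmega_add (ξ : Module.Dual ℂ g) (x y : g ⊗[ℂ] g) :
    contractOmega g (x + y) ξ = contractOmega g x ξ + contractOmega g y ξ := by
  simp [contractOmega]

/-- The linear map `ξ ↦ contractOmega g Ω ξ`. -/
noncomputable def sharpMap (g : Type) [AddCommGroup g] [Module ℂ g] (Ω : g ⊗[ℂ] g) :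
    Module.Dual ℂ g →ₗ[ℂ] g where
  toFun ξ := contractOmega g Ω ξ
  map_add' ξ ζ := by simp [contractOmega, TensorProduct.map_add_left]
  map_smul' c ξ := by simp [contractOmega, TensorProduct.map_smul_left]

lemma apply_contract (ξ η : Module.Dual ℂ g) (t : g ⊗[ℂ] g) :
    η (contractOmega g t ξ) = pairT ξ η t := by
  induction t using TensorProduct.induction_on with
  | zero => simp [contractOmega_zero]
  | tmul a b => rw [contractOmega_tmul, pairT_tmul, map_smul, smul_eq_mul]
  | add x y hx hy => rw [contractOmega_add, map_add, hx, hy, map_add]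

lemma pairT_comm (ξ η : Module.Dual ℂ g) (t : g ⊗[ℂ] g) :
    pairT ξ η (TensorProduct.comm ℂ g g t) = pairT η ξ t := by
  induction t using TensorProduct.induction_on with
  | zero => simp
  | tmul a b => rw [TensorProduct.comm_tmul, pairT_tmul, pairT_tmul, mul_comm]
  | add x y hx hy => rw [map_add, map_add, map_add, hx, hy]

lemma pairT_map (ξ η : Module.Dual ℂ g) (f f' : g →ₗ[ℂ] g) (t : g ⊗[ℂ] g) :
    pairT ξ η (TensorProduct.map f f' t) = pairT (ξ ∘ₗ f) (η ∘ₗ f') t := by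
  induction t using TensorProduct.induction_on with
  | zero => simp
  | tmul a b => rw [TensorProduct.map_tmul, pairT_tmul, pairT_tmul]; rfl
  | add x y hx hy => rw [map_add, map_add, map_add, hx, hy]

lemma eq_zero_of_pairT [FiniteDimensional ℂ g] (t : g ⊗[ℂ] g)
    (h : ∀ ξ η : Module.Dual ℂ g, pairT ξ η t = 0) : t = 0 := by
  classical
  let b := Module.Basis.ofVectorSpace ℂ g
  let B := b.tensorProduct b
  have key : ∀ (i j) (s : g ⊗[ℂ] g), B.repr s (i, j) = pairT (b.coord i) (b.coord j) s := by
    intro i j s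
    induction s using TensorProduct.induction_on with
    | zero => simp
    | tmul a c =>
        simp [B, Module.Basis.tensorProduct_repr_tmul_apply, pairT_tmul, Module.Basis.coord_apply, mul_comm]
    | add x y hx hy => rw [map_add, map_add, Finsupp.add_apply, hx, hy]
  have h0 : B.repr t = 0 := by
    ext p
    obtain ⟨i, j⟩ := p
    rw [key i j t, h]
    simp
  exact (LinearEquiv.map_eq_zero_iff B.repr).mp h0

lemma map_mem_tensorSub {p q : Submodule ℂ g} {f f' : g →ₗ[ℂ] g}
    (hf : ∀ a, f a ∈ p) (hf' : ∀ a, f' a ∈ q) (t : g ⊗[ℂ] g) :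
    TensorProduct.map f f' t ∈ tensorSub g p q := by
  induction t using TensorProduct.induction_on with
  | zero => rw [map_zero]; exact Submodule.zero_mem _
  | tmul a b => exact Submodule.apply_mem_map₂ _ (hf a) (hf' b)
  | add x y hx hy => rw [map_add]; exact Submodule.add_mem _ hx hy

lemma contract_mem {W W' : Submodule ℂ g} {t : g ⊗[ℂ] g}
    (ht : t ∈ tensorSub g W W') (ξ : Module.Dual ℂ g) :
    contractOmega g t ξ ∈ W' := by
  have hle : tensorSub g W W' ≤ Submodule.comap
      ((TensorProduct.lid ℂ g).toLinearMap ∘ₗ TensorProduct.map ξ LinearMap.id) W' := by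
    apply Submodule.map₂_le.mpr
    intro m hm n hn
    simpa using W'.smul_mem (ξ m) hn
  exact hle ht

end Plain

section Lie

variable {g : Type} [LieRing g] [LieAlgebra ℂ g]

lemma contract_lie (x : g) (ξ : Module.Dual ℂ g) (t : g ⊗[ℂ] g) :
    contractOmega g ⁅x, t⁆ ξ =
      contractOmega g t (ξ ∘ₗ (LieAlgebra.ad ℂ g x)) + ⁅x, contractOmega g t ξ⁆ := by
  induction t using TensorProduct.induction_on with
  | zero => rw [lie_zero, contractOmega_zero, contractOmega_zero, lie_zero, add_zero]
  | tmul a b =>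
      rw [TensorProduct.LieModule.lie_tmul_right, contractOmega_add, contractOmega_tmul,
        contractOmega_tmul, contractOmega_tmul, contractOmega_tmul, lie_smul]
      simp [LieAlgebra.ad_apply]
  | add s u hs hu =>
      rw [lie_add, contractOmega_add, hs, hu, contractOmega_add, contractOmega_add, lie_add]
      abel

end Lie

end Stmt19Aux

open Stmt19Aux

/-- if `l` acts semisimply on `g`, `Ω ∈ (S²g)^g`, `g_Ω` is the span
of the components of `Ω`, and the inverse form of `Ω` restricted to `l_Ω = l ∩ g_Ω`
is nondegenerate, then there is an `l`-invariant complement `m` of `l` with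
`Ω ∈ (l⊗l) ⊕ (m⊗m)`. -/
theorem stmt19 (g : Type) [LieRing g] [LieAlgebra ℂ g] [FiniteDimensional ℂ g]
    (l : LieSubalgebra ℂ g)
    -- `l` acts semisimply on `g`: every `l`-invariant subspace has an `l`-invariant complement
    (hss : ∀ p : Submodule ℂ g, (∀ x ∈ l, ∀ v ∈ p, ⁅x, v⁆ ∈ p) →
      ∃ q : Submodule ℂ g, IsCompl p q ∧ ∀ x ∈ l, ∀ v ∈ q, ⁅x, v⁆ ∈ q)
    (Ω : g ⊗[ℂ] g)
    (hsymm : TensorProduct.comm ℂ g g Ω = Ω)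
    (hinv : ∀ x : g, ⁅x, Ω⁆ = 0)
    -- `g_Ω` : the span of the components of `Ω`
    (gΩ : Submodule ℂ g) (hgΩ : gΩ = sInf {W : Submodule ℂ g | Ω ∈ tensorSub g W W})
    -- nondegeneracy of the inverse form `Ω⁻¹` on `l_Ω = l ∩ g_Ω`
    (hnd : ∀ u ∈ l.toSubmodule ⊓ gΩ,
      (∀ ξ : Module.Dual ℂ g, contractOmega g Ω ξ = u →
        ∀ v ∈ l.toSubmodule ⊓ gΩ, ξ v = 0) → u = 0) :
    ∃ m : Submodule ℂ g, IsCompl l.toSubmodule m ∧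
      (∀ x ∈ l, ∀ v ∈ m, ⁅x, v⁆ ∈ m) ∧
      Ω ∈ tensorSub g l.toSubmodule l.toSubmodule ⊔ tensorSub g m m := by
  classical
  set S : Submodule ℂ g := LinearMap.range (sharpMap g Ω) with hSdef
  have hmemS : ∀ ξ : Module.Dual ℂ g, contractOmega g Ω ξ ∈ S := fun ξ => ⟨ξ, rfl⟩
  -- symmetry of the pairing
  have hsy : ∀ ξ η : Module.Dual ℂ g,
      η (contractOmega g Ω ξ) = ξ (contractOmega g Ω η) := by
    intro ξ η
    rw [apply_contract, apply_contract]
    conv_lhs => rw [← hsymm]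
    rw [pairT_comm]
  -- functionals vanishing on S contract to zero
  have hann : ∀ ζ : Module.Dual ℂ g, (∀ v ∈ S, ζ v = 0) → contractOmega g Ω ζ = 0 := by
    intro ζ hζ
    rw [← Module.forall_dual_apply_eq_zero_iff ℂ]
    intro φ
    rw [hsy ζ φ]
    exact hζ _ (hmemS φ)
  -- contraction only depends on restriction of functional to S
  have hcongr : ∀ ξ ζ : Module.Dual ℂ g, (∀ v ∈ S, ξ v = ζ v) →
      contractOmega g Ω ξ = contractOmega g Ω ζ := by
    intro ξ ζ h
    have h0 : contractOmega g Ω (ξ - ζ) = 0 :=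
      hann (ξ - ζ) (fun v hv => by
        rw [LinearMap.sub_apply, h v hv, sub_self])
    have h1 : contractOmega g Ω (ξ - ζ) = contractOmega g Ω ξ - contractOmega g Ω ζ :=
      map_sub (sharpMap g Ω) ξ ζ
    rw [h1] at h0
    exact sub_eq_zero.mp h0
  -- Ω lies in S ⊗ S
  have hΩS : Ω ∈ tensorSub g S S := by
    obtain ⟨C, hC⟩ := Submodule.exists_isCompl S
    set e : g →ₗ[ℂ] g := S.subtype ∘ₗ S.linearProjOfIsCompl C hC with he
    have heS : ∀ v ∈ S, e v = v := by
      intro v hv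
      have h1 : S.linearProjOfIsCompl C hC v = ⟨v, hv⟩ :=
        Submodule.linearProjOfIsCompl_apply_left hC ⟨v, hv⟩
      rw [he]
      simp only [LinearMap.comp_apply, h1]
      rfl
    have hrange : ∀ a, e a ∈ S := fun a => (S.linearProjOfIsCompl C hC a).2
    have hkey : Ω = TensorProduct.map e e Ω := by
      rw [← sub_eq_zero, ← neg_sub, neg_eq_zero]
      apply eq_zero_of_pairT
      intro ξ η
      rw [map_sub, pairT_map, ← apply_contract ξ η Ω, ← apply_contract (ξ ∘ₗ e) (η ∘ₗ e) Ω]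
      have h1 : contractOmega g Ω (ξ ∘ₗ e) = contractOmega g Ω ξ :=
        hcongr _ _ (fun v hv => by
          simp only [LinearMap.comp_apply]; rw [heS v hv])
      rw [h1]
      simp only [LinearMap.comp_apply]
      rw [heS _ (hmemS ξ), sub_self]
    rw [hkey]
    exact map_mem_tensorSub hrange hrange Ω
  -- identify gΩ with S
  have hgS : gΩ = S := by
    rw [hgΩ]
    refine le_antisymm (sInf_le hΩS) (le_sInf ?_)
    intro W hW
    rintro v ⟨ξ, rfl⟩
    exact contract_mem hW ξ
  rw [hgS] at hnd
  set lΩ : Submodule ℂ g := l.toSubmodule ⊓ S with hlΩdef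
  have hlΩS : lΩ ≤ S := inf_le_right
  set mΩ : Submodule ℂ g :=
    S ⊓ (⨅ ζ : {ζ : Module.Dual ℂ g // contractOmega g Ω ζ ∈ lΩ}, LinearMap.ker ζ.1)
    with hmΩdef
  have hmem_mΩ : ∀ v : g, v ∈ mΩ ↔ v ∈ S ∧
      ∀ ζ : Module.Dual ℂ g, contractOmega g Ω ζ ∈ lΩ → ζ v = 0 := by
    intro v
    rw [hmΩdef, Submodule.mem_inf]
    constructor
    · rintro ⟨h1, h2⟩
      refine ⟨h1, fun ζ hζ => ?_⟩
      have := (Submodule.mem_iInf _).mp h2 ⟨ζ, hζ⟩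
      exact this
    · rintro ⟨h1, h2⟩
      exact ⟨h1, (Submodule.mem_iInf _).mpr (fun ζ => h2 ζ.1 ζ.2)⟩
  have hmΩS : mΩ ≤ S := inf_le_left
  -- lΩ and mΩ are disjoint
  have hdisj : ∀ v, v ∈ lΩ → v ∈ mΩ → v = 0 := by
    intro v hvl hvm
    obtain ⟨hvS, hperp⟩ := (hmem_mΩ v).mp hvm
    refine hnd v hvl ?_
    intro ξ hξ w hw
    obtain ⟨ζ, hζ⟩ := (Submodule.mem_inf.mp hw).2
    have hζ' : contractOmega g Ω ζ = w := hζ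
    rw [← hζ', hsy ζ ξ, hξ]
    exact hperp ζ (by rw [hζ']; exact hw)
  -- functionals in the kernel of sharp vanish on S
  have hker : ∀ ξ : Module.Dual ℂ g, contractOmega g Ω ξ = 0 → ∀ v ∈ S, ξ v = 0 := by
    intro ξ h0 v hv
    obtain ⟨ζ, hζ⟩ := hv
    have hζ' : contractOmega g Ω ζ = v := hζ
    rw [← hζ', hsy ζ ξ, h0, map_zero]
  -- the map Φ : S → Dual lΩ induced by the inverse form
  have hkerle : LinearMap.ker (sharpMap g Ω) ≤ LinearMap.ker (LinearMap.dualMap lΩ.subtype) := by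
    intro ξ hξ
    rw [LinearMap.mem_ker] at hξ ⊢
    ext u
    have := hker ξ hξ u ((Submodule.mem_inf.mp u.2).2)
    simpa using this
  set Φ : S →ₗ[ℂ] Module.Dual ℂ lΩ :=
    ((LinearMap.ker (sharpMap g Ω)).liftQ (LinearMap.dualMap lΩ.subtype) hkerle) ∘ₗ
      ((sharpMap g Ω).quotKerEquivRange).symm.toLinearMap with hΦdef
  have hΦ : ∀ ξ : Module.Dual ℂ g,
      Φ ⟨contractOmega g Ω ξ, hmemS ξ⟩ = LinearMap.dualMap lΩ.subtype ξ := by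
    intro ξ
    have h1 := LinearMap.quotKerEquivRange_apply_mk (sharpMap g Ω) ξ
    have h2 : ((sharpMap g Ω).quotKerEquivRange).symm ⟨contractOmega g Ω ξ, hmemS ξ⟩ =
        Submodule.Quotient.mk ξ := by
      rw [LinearEquiv.symm_apply_eq]
      exact Subtype.ext h1.symm
    rw [hΦdef]
    simp only [LinearMap.comp_apply, LinearEquiv.coe_toLinearMap]
    rw [h2, Submodule.liftQ_apply]
  set A : lΩ →ₗ[ℂ] Module.Dual ℂ lΩ := Φ ∘ₗ Submodule.inclusion hlΩS with hAdef
  have hA : ∀ (ξ : Module.Dual ℂ g) (hξ : contractOmega g Ω ξ ∈ lΩ),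
      A ⟨contractOmega g Ω ξ, hξ⟩ = LinearMap.dualMap lΩ.subtype ξ := by
    intro ξ hξ
    have h1 : Submodule.inclusion hlΩS ⟨contractOmega g Ω ξ, hξ⟩ =
        ⟨contractOmega g Ω ξ, hmemS ξ⟩ := Subtype.ext rfl
    rw [hAdef, LinearMap.comp_apply, h1, hΦ]
  have hAker : ∀ u : lΩ, A u = 0 → u = 0 := by
    intro u hu
    obtain ⟨ξ, hξ⟩ := (Submodule.mem_inf.mp u.2).2
    have hξ' : contractOmega g Ω ξ = u.1 := hξ
    have hmem : contractOmega g Ω ξ ∈ lΩ := by rw [hξ']; exact u.2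
    have hu' : LinearMap.dualMap lΩ.subtype ξ = 0 := by
      rw [← hA ξ hmem, show (⟨contractOmega g Ω ξ, hmem⟩ : lΩ) = u from Subtype.ext hξ']
      exact hu
    have h0 : u.1 = 0 := by
      refine hnd u.1 u.2 ?_
      intro ξ₂ hξ₂ w hw
      have hdiff : contractOmega g Ω (ξ₂ - ξ) = 0 := by
        have h1 : contractOmega g Ω (ξ₂ - ξ) = contractOmega g Ω ξ₂ - contractOmega g Ω ξ :=
          map_sub (sharpMap g Ω) ξ₂ ξ
        rw [h1, hξ₂, hξ', sub_self]
      have h2 : ξ₂ w - ξ w = 0 := by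
        have := hker (ξ₂ - ξ) hdiff w (Submodule.mem_inf.mp hw).2
        simpa using this
      have h3 : ξ w = 0 := by
        have := LinearMap.ext_iff.mp hu' ⟨w, hw⟩
        simpa using this
      rw [sub_eq_zero] at h2
      rw [h2, h3]
    exact Subtype.ext h0
  have hAsurj : Function.Surjective A := by
    have hfr : Module.finrank ℂ lΩ = Module.finrank ℂ (Module.Dual ℂ lΩ) :=
      (Subspace.dual_finrank_eq).symm
    exact (LinearMap.injective_iff_surjective_of_finrank_eq_finrank hfr).mp
      ((injective_iff_map_eq_zero A).mpr hAker)
  -- decomposition of S as lΩ ⊕ mΩ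
  have hdecomp : ∀ v ∈ S, ∃ u ∈ lΩ, v - u ∈ mΩ := by
    intro v hv
    obtain ⟨ξv, hξv⟩ := hv
    have hξv' : contractOmega g Ω ξv = v := hξv
    obtain ⟨u, hu⟩ := hAsurj (LinearMap.dualMap lΩ.subtype ξv)
    refine ⟨u.1, u.2, ?_⟩
    rw [hmem_mΩ]
    constructor
    · exact Submodule.sub_mem S (hξv' ▸ hmemS ξv) (hlΩS u.2)
    · intro ζ hζ
      obtain ⟨ξu, hξu⟩ := (Submodule.mem_inf.mp u.2).2
      have hξu' : contractOmega g Ω ξu = u.1 := hξu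
      have hmemu : contractOmega g Ω ξu ∈ lΩ := by rw [hξu']; exact u.2
      have hu' : LinearMap.dualMap lΩ.subtype ξu = LinearMap.dualMap lΩ.subtype ξv := by
        rw [← hA ξu hmemu, show (⟨contractOmega g Ω ξu, hmemu⟩ : lΩ) = u from Subtype.ext hξu',
          hu]
      have e1 : ζ v = ξv (contractOmega g Ω ζ) := by rw [← hξv']; exact hsy ξv ζ
      have e2 : ζ u.1 = ξu (contractOmega g Ω ζ) := by rw [← hξu']; exact hsy ξu ζ
      have e3 : ξu (contractOmega g Ω ζ) = ξv (contractOmega g Ω ζ) := by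
        have := LinearMap.ext_iff.mp hu' ⟨contractOmega g Ω ζ, hζ⟩
        simpa using this
      rw [map_sub, e1, e2, e3, sub_self]
  have hsupS : lΩ ⊔ mΩ = S := by
    refine le_antisymm (sup_le hlΩS hmΩS) ?_
    intro v hv
    obtain ⟨u, hu, hw⟩ := hdecomp v hv
    have hv' : v = u + (v - u) := by abel
    have := Submodule.add_mem_sup hu hw
    rwa [← hv'] at this
  -- equivariance of the contraction
  have hequiv : ∀ (x : g) (ξ : Module.Dual ℂ g),
      ⁅x, contractOmega g Ω ξ⁆ = - contractOmega g Ω (ξ ∘ₗ (LieAlgebra.ad ℂ g) x) := by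
    intro x ξ
    have h1 := contract_lie x ξ Ω
    rw [hinv x, contractOmega_zero] at h1
    have h2 : ⁅x, contractOmega g Ω ξ⁆ + contractOmega g Ω (ξ ∘ₗ (LieAlgebra.ad ℂ g) x) = 0 := by
      rw [add_comm]; exact h1.symm
    exact eq_neg_of_add_eq_zero_left h2
  have hSinv : ∀ (x : g), ∀ v ∈ S, ⁅x, v⁆ ∈ S := by
    intro x v hv
    obtain ⟨ξ, hξ⟩ := hv
    have hξ' : contractOmega g Ω ξ = v := hξ
    rw [← hξ', hequiv]
    exact Submodule.neg_mem _ (hmemS _)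
  have hlΩinv : ∀ x ∈ l, ∀ v ∈ lΩ, ⁅x, v⁆ ∈ lΩ := by
    intro x hx v hv
    obtain ⟨h1, h2⟩ := Submodule.mem_inf.mp hv
    exact Submodule.mem_inf.mpr ⟨l.lie_mem hx h1, hSinv x v h2⟩
  have hmΩinv : ∀ x ∈ l, ∀ v ∈ mΩ, ⁅x, v⁆ ∈ mΩ := by
    intro x hx v hv
    obtain ⟨hvS, hperp⟩ := (hmem_mΩ v).mp hv
    rw [hmem_mΩ]
    refine ⟨hSinv x v hvS, ?_⟩
    intro ζ hζ
    have e1 : ζ ⁅x, v⁆ = (ζ ∘ₗ (LieAlgebra.ad ℂ g) x) v := by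
      simp [LieAlgebra.ad_apply]
    rw [e1]
    apply hperp
    have h2 : contractOmega g Ω (ζ ∘ₗ (LieAlgebra.ad ℂ g) x) =
        - ⁅x, contractOmega g Ω ζ⁆ := by rw [hequiv, neg_neg]
    rw [h2]
    exact Submodule.neg_mem _ (hlΩinv x hx _ hζ)
  -- invariant complement of l + S
  have hpinv : ∀ x ∈ l, ∀ v ∈ l.toSubmodule ⊔ S, ⁅x, v⁆ ∈ l.toSubmodule ⊔ S := by
    intro x hx v hv
    obtain ⟨a, ha, b, hb, rfl⟩ := Submodule.mem_sup.mp hv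
    rw [lie_add]
    exact Submodule.add_mem_sup (l.lie_mem hx ha) (hSinv x b hb)
  obtain ⟨g', hg'compl, hg'inv⟩ := hss (l.toSubmodule ⊔ S) hpinv
  refine ⟨g' ⊔ mΩ, ⟨?_, ?_⟩, ?_, ?_⟩
  · -- disjointness of l and m
    rw [Submodule.disjoint_def]
    intro v hvl hvm
    obtain ⟨a, ha, b, hb, rfl⟩ := Submodule.mem_sup.mp hvm
    have haP : a ∈ l.toSubmodule ⊔ S := by
      have hab : a = (a + b) - b := by abel
      rw [hab]
      exact Submodule.sub_mem _ (Submodule.mem_sup_left hvl)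
        (Submodule.mem_sup_right (hmΩS hb))
    have ha0 : a = 0 := Submodule.disjoint_def.mp hg'compl.disjoint a haP ha
    rw [ha0, zero_add] at hvl ⊢
    exact hdisj b (Submodule.mem_inf.mpr ⟨hvl, hmΩS hb⟩) hb
  · -- codisjointness
    rw [codisjoint_iff]
    have h1 : l.toSubmodule ⊔ S ⊔ g' = ⊤ := codisjoint_iff.mp hg'compl.codisjoint
    rw [← top_le_iff, ← h1]
    refine sup_le (sup_le le_sup_left ?_) ?_
    · rw [← hsupS]
      exact sup_le (le_trans inf_le_left le_sup_left)
        (le_trans le_sup_right le_sup_right)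
    · exact le_trans le_sup_left le_sup_right
  · -- invariance of m
    intro x hx v hv
    obtain ⟨a, ha, b, hb, rfl⟩ := Submodule.mem_sup.mp hv
    rw [lie_add]
    exact Submodule.add_mem_sup (hg'inv x hx a ha) (hmΩinv x hx b hb)
  · -- Ω ∈ l ⊗ l ⊔ m ⊗ m
    obtain ⟨C, hC⟩ := Submodule.exists_isCompl S
    have htop : S ⊔ C = ⊤ := codisjoint_iff.mp hC.codisjoint
    have hCl : IsCompl lΩ (mΩ ⊔ C) := by
      constructor
      · rw [Submodule.disjoint_def]
        intro v hvl hvm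
        obtain ⟨b, hb, c, hc, rfl⟩ := Submodule.mem_sup.mp hvm
        have hcS : c ∈ S := by
          have hbc : c = (b + c) - b := by abel
          rw [hbc]
          exact Submodule.sub_mem _ (hlΩS hvl) (hmΩS hb)
        have hc0 : c = 0 := Submodule.disjoint_def.mp hC.disjoint c hcS hc
        rw [hc0, add_zero] at hvl ⊢
        exact hdisj b hvl hb
      · rw [codisjoint_iff, ← sup_assoc, hsupS]
        exact htop
    have hCm : IsCompl mΩ (lΩ ⊔ C) := by
      constructor
      · rw [Submodule.disjoint_def]
        intro v hvm hvl
        obtain ⟨b, hb, c, hc, rfl⟩ := Submodule.mem_sup.mp hvl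
        have hcS : c ∈ S := by
          have hbc : c = (b + c) - b := by abel
          rw [hbc]
          exact Submodule.sub_mem _ (hmΩS hvm) (hlΩS hb)
        have hc0 : c = 0 := Submodule.disjoint_def.mp hC.disjoint c hcS hc
        rw [hc0, add_zero] at hvm ⊢
        exact hdisj b hb hvm
      · rw [codisjoint_iff, ← sup_assoc, sup_comm mΩ lΩ, hsupS]
        exact htop
    set el : g →ₗ[ℂ] g := lΩ.subtype ∘ₗ lΩ.linearProjOfIsCompl (mΩ ⊔ C) hCl with hel
    set em : g →ₗ[ℂ] g := mΩ.subtype ∘ₗ mΩ.linearProjOfIsCompl (lΩ ⊔ C) hCm with hem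
    have hel_mem : ∀ a, el a ∈ lΩ := fun a => (lΩ.linearProjOfIsCompl (mΩ ⊔ C) hCl a).2
    have hem_mem : ∀ a, em a ∈ mΩ := fun a => (mΩ.linearProjOfIsCompl (lΩ ⊔ C) hCm a).2
    have hel_left : ∀ v ∈ lΩ, el v = v := by
      intro v hv
      have h1 : lΩ.linearProjOfIsCompl (mΩ ⊔ C) hCl v = ⟨v, hv⟩ :=
        Submodule.linearProjOfIsCompl_apply_left hCl ⟨v, hv⟩
      rw [hel]
      simp only [LinearMap.comp_apply, h1]
      rfl
    have hem_left : ∀ v ∈ mΩ, em v = v := by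
      intro v hv
      have h1 : mΩ.linearProjOfIsCompl (lΩ ⊔ C) hCm v = ⟨v, hv⟩ :=
        Submodule.linearProjOfIsCompl_apply_left hCm ⟨v, hv⟩
      rw [hem]
      simp only [LinearMap.comp_apply, h1]
      rfl
    have hel_right : ∀ v ∈ mΩ ⊔ C, el v = 0 := by
      intro v hv
      have h1 : lΩ.linearProjOfIsCompl (mΩ ⊔ C) hCl v = 0 :=
        Submodule.linearProjOfIsCompl_apply_right' hCl hv
      rw [hel]
      simp only [LinearMap.comp_apply, h1]
      rfl
    have hem_right : ∀ v ∈ lΩ ⊔ C, em v = 0 := by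
      intro v hv
      have h1 : mΩ.linearProjOfIsCompl (lΩ ⊔ C) hCm v = 0 :=
        Submodule.linearProjOfIsCompl_apply_right' hCm hv
      rw [hem]
      simp only [LinearMap.comp_apply, h1]
      rfl
    have hsum : ∀ v ∈ S, (el + em) v = v := by
      intro v hv
      rw [← hsupS] at hv
      obtain ⟨u, hu, w, hw, rfl⟩ := Submodule.mem_sup.mp hv
      simp only [LinearMap.add_apply, map_add]
      rw [hel_left u hu, hel_right w (Submodule.mem_sup_left hw), hem_left w hw,
        hem_right u (Submodule.mem_sup_left hu)]
      abel
    -- perpendicularity facts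
    have hP1 : ∀ ζ : Module.Dual ℂ g, (∀ w ∈ mΩ, ζ w = 0) → contractOmega g Ω ζ ∈ lΩ := by
      intro ζ hζ
      obtain ⟨u, hu, hw⟩ := hdecomp _ (hmemS ζ)
      have hwS : contractOmega g Ω ζ - u ∈ S := hmΩS hw
      obtain ⟨ρ, hρ⟩ := hwS
      have hρ' : contractOmega g Ω ρ = contractOmega g Ω ζ - u := hρ
      have hρS : ∀ s ∈ S, ρ s = 0 := by
        intro s hs
        rw [← hsupS] at hs
        obtain ⟨u', hu', w', hw', rfl⟩ := Submodule.mem_sup.mp hs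
        rw [map_add]
        have h1 : ρ u' = 0 := by
          obtain ⟨σ, hσ⟩ := (Submodule.mem_inf.mp hu').2
          have hσ' : contractOmega g Ω σ = u' := hσ
          rw [← hσ', hsy σ ρ, hρ']
          exact ((hmem_mΩ _).mp hw).2 σ (by rw [hσ']; exact hu')
        have h2 : ρ w' = 0 := by
          obtain ⟨σ', hσ'⟩ := hmΩS hw'
          have hσ'' : contractOmega g Ω σ' = w' := hσ'
          have ha : σ' (contractOmega g Ω ζ) = 0 := by
            rw [hsy ζ σ', hσ'']
            exact hζ w' hw'
          have hb : σ' u = 0 := by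
            obtain ⟨τ, hτ⟩ := hlΩS hu
            have hτ' : contractOmega g Ω τ = u := hτ
            rw [← hτ', hsy τ σ', hσ'']
            exact ((hmem_mΩ w').mp hw').2 τ (by rw [hτ']; exact hu)
          have hc : ρ w' = σ' (contractOmega g Ω ζ) - σ' u := by
            rw [← hσ'', hsy σ' ρ, hρ', map_sub]
          rw [hc, ha, hb, sub_zero]
        rw [h1, h2, add_zero]
      have hw0 : contractOmega g Ω ζ - u = 0 := by
        rw [← hρ']
        exact hann ρ hρS
      rw [sub_eq_zero] at hw0
      rw [hw0]
      exact hu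
    have hP2 : ∀ ζ : Module.Dual ℂ g, (∀ w ∈ lΩ, ζ w = 0) → contractOmega g Ω ζ ∈ mΩ := by
      intro ζ hζ
      rw [hmem_mΩ]
      refine ⟨hmemS ζ, ?_⟩
      intro ζ' hζ'
      rw [hsy ζ ζ']
      exact hζ _ hζ'
    -- the main decomposition of Ω
    have hmain : Ω = TensorProduct.map el el Ω + TensorProduct.map em em Ω := by
      have hsplit : Ω = TensorProduct.map (el + em) (el + em) Ω := by
        rw [← sub_eq_zero, ← neg_sub, neg_eq_zero]
        apply eq_zero_of_pairT
        intro ξ η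
        rw [map_sub, pairT_map, ← apply_contract ξ η Ω,
          ← apply_contract (ξ ∘ₗ (el + em)) (η ∘ₗ (el + em)) Ω]
        have hc : contractOmega g Ω (ξ ∘ₗ (el + em)) = contractOmega g Ω ξ :=
          hcongr _ _ (fun v hv => by
            simp only [LinearMap.comp_apply]; rw [hsum v hv])
        rw [hc]
        simp only [LinearMap.comp_apply]
        rw [hsum _ (hmemS ξ), sub_self]
      have hexp : TensorProduct.map (el + em) (el + em) Ω =
          TensorProduct.map el el Ω + TensorProduct.map el em Ω +
          TensorProduct.map em el Ω + TensorProduct.map em em Ω := by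
        rw [TensorProduct.map_add_left, TensorProduct.map_add_right,
          TensorProduct.map_add_right]
        simp only [LinearMap.add_apply]
        abel
      have hlm : TensorProduct.map el em Ω = 0 := by
        apply eq_zero_of_pairT
        intro ξ η
        rw [pairT_map, ← apply_contract]
        have h1 : contractOmega g Ω (ξ ∘ₗ el) ∈ lΩ :=
          hP1 _ (fun w hw => by
            simp only [LinearMap.comp_apply]
            rw [hel_right w (Submodule.mem_sup_left hw), map_zero])
        simp only [LinearMap.comp_apply]
        rw [hem_right _ (Submodule.mem_sup_left h1), map_zero]
      have hml : TensorProduct.map em el Ω = 0 := by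
        apply eq_zero_of_pairT
        intro ξ η
        rw [pairT_map, ← apply_contract]
        have h1 : contractOmega g Ω (ξ ∘ₗ em) ∈ mΩ :=
          hP2 _ (fun w hw => by
            simp only [LinearMap.comp_apply]
            rw [hem_right w (Submodule.mem_sup_left hw), map_zero])
        simp only [LinearMap.comp_apply]
        rw [hel_right _ (Submodule.mem_sup_left h1), map_zero]
      conv_lhs => rw [hsplit]
      rw [hexp, hlm, hml, add_zero, add_zero]
    rw [hmain]
    refine Submodule.add_mem_sup ?_ ?_
    · have hle : tensorSub g lΩ lΩ ≤ tensorSub g l.toSubmodule l.toSubmodule :=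
        Submodule.map₂_le_map₂ inf_le_left inf_le_left
      exact hle (map_mem_tensorSub hel_mem hel_mem Ω)
    · have hle : tensorSub g mΩ mΩ ≤ tensorSub g (g' ⊔ mΩ) (g' ⊔ mΩ) :=
        Submodule.map₂_le_map₂ le_sup_right le_sup_right
      exact hle (map_mem_tensorSub hem_mem hem_mem Ω)
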